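/- Let Γ ⊆ ℝ^d be a lattice and Γ* = {x ∈ ℝ^d : ⟨x,y⟩ ∈ ℤ for all y ∈ Γ} its dual lattice. Then OS(Γ) = OS(Γ*) and Scal_{Γ*}(R) = Scal_Γ(R⁻¹) for all R ∈ OS(Γ); in particular den_{Γ*}(R) = den_Γ(R⁻¹). -/

import Mathlib

noncomputable section

abbrev Euc (d : ℕ) : Type := EuclideanSpace ℝ (Fin d)

/-- Γ is a (full-rank) lattice in ℝ^d: the ℤ-span of an ℝ-basis of ℝ^d. -/
def IsLattice {d : ℕ} (Γ : AddSubgroup (Euc d)) : Prop :=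
  ∃ b : Module.Basis (Fin d) ℝ (Euc d),
    Γ = (Submodule.span ℤ (Set.range ⇑b)).toAddSubgroup

/-- Two subgroups are commensurate if their intersection has finite index in both. -/
def Commensurate {d : ℕ} (Γ₁ Γ₂ : AddSubgroup (Euc d)) : Prop :=
  ((Γ₁ ⊓ Γ₂).addSubgroupOf Γ₁).FiniteIndex ∧ ((Γ₁ ⊓ Γ₂).addSubgroupOf Γ₂).FiniteIndex

/-- The image α·R(Γ) of Γ under the similarity transformation αR. -/
def simMap {d : ℕ} (α : ℝ) (R : Euc d ≃ₗᵢ[ℝ] Euc d) (Γ : AddSubgroup (Euc d)) :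
    AddSubgroup (Euc d) :=
  Γ.map (α • R.toLinearEquiv.toLinearMap).toAddMonoidHom

/-- The image R(Γ). -/
def rotMap {d : ℕ} (R : Euc d ≃ₗᵢ[ℝ] Euc d) (Γ : AddSubgroup (Euc d)) :
    AddSubgroup (Euc d) :=
  Γ.map R.toLinearEquiv.toLinearMap.toAddMonoidHom

/-- The set of similarity isometries of Γ. -/
def OSset {d : ℕ} (Γ : AddSubgroup (Euc d)) : Set (Euc d ≃ₗᵢ[ℝ] Euc d) :=
  {R | ∃ α : ℝ, 0 < α ∧ simMap α R Γ ≤ Γ}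

/-- The set of scaling factors of R, Scal_Γ(R) = {α : αRΓ ⊆ Γ}. -/
def Scal {d : ℕ} (Γ : AddSubgroup (Euc d)) (R : Euc d ≃ₗᵢ[ℝ] Euc d) : Set ℝ :=
  {α | simMap α R Γ ≤ Γ}

/-- δ is the denominator of R: the smallest positive element of Scal Γ R. -/
def IsDen {d : ℕ} (Γ : AddSubgroup (Euc d)) (R : Euc d ≃ₗᵢ[ℝ] Euc d) (δ : ℝ) : Prop :=
  0 < δ ∧ δ ∈ Scal Γ R ∧ ∀ β : ℝ, 0 < β → β ∈ Scal Γ R → δ ≤ β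

/-- The set of coincidence isometries of Γ. -/
def OCset {d : ℕ} (Γ : AddSubgroup (Euc d)) : Set (Euc d ≃ₗᵢ[ℝ] Euc d) :=
  {R | Commensurate Γ (rotMap R Γ)}

/-- The coincidence index Σ_Γ(R) = [Γ : Γ ∩ RΓ]. -/
def coinIndex {d : ℕ} (Γ : AddSubgroup (Euc d)) (R : Euc d ≃ₗᵢ[ℝ] Euc d) : ℕ :=
  (rotMap R Γ).relIndex Γ

/-- The coincidence site lattice Γ(R) = Γ ∩ RΓ. -/
def CSL {d : ℕ} (Γ : AddSubgroup (Euc d)) (R : Euc d ≃ₗᵢ[ℝ] Euc d) :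
    AddSubgroup (Euc d) :=
  Γ ⊓ rotMap R Γ

/-- The dual lattice Γ* = {x : ⟨x,y⟩ ∈ ℤ for all y ∈ Γ}. -/
def dualLattice {d : ℕ} (Γ : AddSubgroup (Euc d)) : AddSubgroup (Euc d) where
  carrier := {x | ∀ y ∈ Γ, ∃ n : ℤ, (inner ℝ x y : ℝ) = (n : ℝ)}
  zero_mem' := by
    intro y hy
    exact ⟨0, by simp⟩
  add_mem' := by
    intro a b ha hb y hy
    obtain ⟨n, hn⟩ := ha y hy
    obtain ⟨m, hm⟩ := hb y hy
    exact ⟨n + m, by rw [inner_add_left, hn, hm]; push_cast; ring⟩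
  neg_mem' := by
    intro a ha y hy
    obtain ⟨n, hn⟩ := ha y hy
    exact ⟨-n, by rw [inner_neg_left, hn]; push_cast; ring⟩

section Aux

open Submodule Finset

/-- The real inner product as a bilinear form. -/
def rB (d : ℕ) : LinearMap.BilinForm ℝ (Euc d) :=
  LinearMap.mk₂ ℝ (fun x y => (inner ℝ x y : ℝ))
    (fun x y z => inner_add_left x y z)
    (fun a x y => real_inner_smul_left x y a)
    (fun x y z => inner_add_right x y z)
    (fun a x y => real_inner_smul_right x y a)

@[simp] lemma rB_apply {d : ℕ} (x y : Euc d) : rB d x y = (inner ℝ x y : ℝ) := rfl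

lemma rB_nondeg (d : ℕ) : (rB d).Nondegenerate := by
  refine ⟨?_, ?_⟩ <;>
  · intro x hx
    have := hx x
    rw [rB_apply, inner_self_eq_zero] at this
    exact this

lemma rB_symm (d : ℕ) : (rB d).IsSymm := by
  rw [LinearMap.BilinForm.isSymm_def]
  intro x y
  exact real_inner_comm y x

lemma dualLattice_toAddSubgroup {d : ℕ} (N : Submodule ℤ (Euc d)) :
    dualLattice N.toAddSubgroup = ((rB d).dualSubmodule N).toAddSubgroup := by
  ext x
  constructor
  · intro hx y hy
    obtain ⟨n, hn⟩ := hx y hy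
    exact Submodule.mem_one.mpr ⟨n, by simpa using hn.symm⟩
  · intro hx y hy
    obtain ⟨n, hn⟩ := Submodule.mem_one.mp (hx y hy)
    exact ⟨n, by simpa using hn.symm⟩

lemma bidual {d : ℕ} (Γ : AddSubgroup (Euc d)) (hΓ : IsLattice Γ) :
    dualLattice (dualLattice Γ) = Γ := by
  classical
  obtain ⟨b, rfl⟩ := hΓ
  rw [dualLattice_toAddSubgroup, (rB d).dualSubmodule_span_of_basis (rB_nondeg d) b,
    dualLattice_toAddSubgroup,
    ← (rB d).dualSubmodule_span_of_basis (rB_nondeg d) b,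
    (rB d).dualSubmodule_dualSubmodule_of_basis (rB_nondeg d) (rB_symm d) b]

lemma mem_scal_iff {d : ℕ} {Γ : AddSubgroup (Euc d)} {R : Euc d ≃ₗᵢ[ℝ] Euc d} {α : ℝ} :
    α ∈ Scal Γ R ↔ ∀ x ∈ Γ, α • R x ∈ Γ := by
  constructor
  · intro h x hx
    exact h (AddSubgroup.mem_map.mpr ⟨x, hx, rfl⟩)
  · rintro h x hx
    obtain ⟨y, hy, rfl⟩ := AddSubgroup.mem_map.mp hx
    exact h y hy

lemma inv_apply_eq_symm {d : ℕ} (R : Euc d ≃ₗᵢ[ℝ] Euc d) (x : Euc d) :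
    R⁻¹ x = R.symm x := rfl

/-- Easy direction: if αR⁻¹Γ ⊆ Γ then αRΓ* ⊆ Γ*. -/
lemma scal_dual_of_scal_inv {d : ℕ} {Γ : AddSubgroup (Euc d)} {R : Euc d ≃ₗᵢ[ℝ] Euc d}
    {α : ℝ} (h : α ∈ Scal Γ R⁻¹) : α ∈ Scal (dualLattice Γ) R := by
  rw [mem_scal_iff] at h ⊢
  intro x hx y hy
  obtain ⟨n, hn⟩ := hx _ (h y hy)
  refine ⟨n, ?_⟩
  rw [← hn]
  rw [real_inner_smul_left, real_inner_smul_right]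
  congr 1
  conv_lhs => rw [show y = R (R⁻¹ y) from (R.apply_symm_apply y).symm]
  exact R.inner_map_map x (R⁻¹ y)

/-- For a lattice, a positive scaling factor for R yields one for R⁻¹. -/
lemma exists_inv_scal {d : ℕ} (b : Module.Basis (Fin d) ℝ (Euc d)) (R : Euc d ≃ₗᵢ[ℝ] Euc d)
    {α : ℝ} (hα : 0 < α)
    (h : α ∈ Scal ((Submodule.span ℤ (Set.range ⇑b)).toAddSubgroup) R) :
    ∃ β : ℝ, 0 < β ∧ β ∈ Scal ((Submodule.span ℤ (Set.range ⇑b)).toAddSubgroup) R⁻¹ := by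
  classical
  set Γ : AddSubgroup (Euc d) := (Submodule.span ℤ (Set.range ⇑b)).toAddSubgroup with hΓdef
  rw [mem_scal_iff] at h
  set c : Fin d → Euc d := fun i => α • R (b i) with hc
  have hcΓ : ∀ i, c i ∈ Γ := fun i => h (b i) (Submodule.subset_span ⟨i, rfl⟩)
  have hA : ∀ j, ∃ f : Fin d → ℤ, ∑ k, f k • b k = c j := fun j =>
    (mem_span_range_iff_exists_fun ℤ).mp (hcΓ j)
  choose A hA using hA
  set M : Matrix (Fin d) (Fin d) ℤ := Matrix.of A with hM
  have hrepr : ∀ j k, b.repr (c j) k = (A j k : ℝ) := by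
    intro j k
    rw [← hA j]
    have : (∑ k, A j k • b k) = ∑ k, ((A j k : ℝ)) • b k := by
      simp [Int.cast_smul_eq_zsmul]
    rw [this, b.repr_sum_self]
  -- c is a basis
  set e : Euc d ≃ₗ[ℝ] Euc d :=
    R.toLinearEquiv.trans (LinearEquiv.smulOfNeZero ℝ (Euc d) α hα.ne') with he
  set cB : Module.Basis (Fin d) ℝ (Euc d) := b.map e with hcB
  have hcBc : ∀ i, cB i = c i := by
    intro i
    rw [hcB, Module.Basis.map_apply]
    rfl
  have hdet : (M.det : ℝ) ≠ 0 := by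
    have hmap : M.map (Int.castRingHom ℝ) = (b.toMatrix ⇑cB).transpose := by
      ext i j
      simp [Matrix.transpose_apply, Module.Basis.toMatrix_apply, hcBc, hrepr, hM]
    have hinv : Invertible (b.toMatrix ⇑cB) := b.invertibleToMatrix cB
    have hu : IsUnit (b.toMatrix ⇑cB).det := Matrix.isUnit_det_of_invertible _
    have : (M.det : ℝ) = (b.toMatrix ⇑cB).det := by
      rw [← Matrix.det_transpose (b.toMatrix ⇑cB), ← hmap, ← RingHom.mapMatrix_apply,
        ← RingHom.map_det]
      simp
    rw [this]
    exact hu.ne_zero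
  have hkey : ∀ i, M.det • b i = ∑ j, M.adjugate i j • c j := by
    intro i
    have step1 : (∑ j, M.adjugate i j • c j)
        = ∑ j, ∑ k, (M.adjugate i j * A j k) • b k := by
      refine Finset.sum_congr rfl fun j _ => ?_
      rw [← hA j, Finset.smul_sum]
      exact Finset.sum_congr rfl fun k _ => smul_smul _ _ _
    rw [step1, Finset.sum_comm]
    symm
    have step2 : ∀ k, (∑ j, (M.adjugate i j * A j k) • b k)
        = ((M.adjugate * M) i k) • b k := by
      intro k
      rw [← Finset.sum_smul, Matrix.mul_apply]
      rfl
    calc (∑ k, ∑ j, (M.adjugate i j * A j k) • b k)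
        = ∑ k, ((M.adjugate * M) i k) • b k := Finset.sum_congr rfl fun k _ => step2 k
      _ = ∑ k, ((M.det • (1 : Matrix (Fin d) (Fin d) ℤ)) i k) • b k := by
          rw [Matrix.adjugate_mul]
      _ = M.det • b i := by
          simp [Matrix.smul_apply, Matrix.one_apply, mul_ite, ite_smul,
            Finset.sum_ite_eq]
  have hdetmem : ∀ x ∈ Γ, M.det • x ∈ simMap α R Γ := by
    intro x hx
    have hx' : x ∈ Submodule.span ℤ (Set.range ⇑b) := hx
    clear hx
    induction hx' using Submodule.span_induction with
    | mem x hxm =>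
        obtain ⟨i, rfl⟩ := hxm
        rw [hkey i]
        refine AddSubgroup.sum_mem _ fun j _ => AddSubgroup.zsmul_mem _ ?_ _
        exact AddSubgroup.mem_map.mpr ⟨b j, Submodule.subset_span ⟨j, rfl⟩, rfl⟩
    | zero => simp [AddSubgroup.zero_mem]
    | add x hxm y hym ihx ihy => rw [smul_add]; exact AddSubgroup.add_mem _ ihx ihy
    | smul n x hxm ih => rw [smul_comm]; exact AddSubgroup.zsmul_mem _ ih n
  have hz2 : (0 : ℝ) < (M.det : ℝ) ^ 2 :=
    lt_of_le_of_ne (sq_nonneg _) (Ne.symm (pow_ne_zero 2 hdet))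
  refine ⟨(M.det : ℝ) ^ 2 / α, div_pos hz2 hα, ?_⟩
  rw [mem_scal_iff]
  intro x hx
  obtain ⟨y, hy, hy2⟩ := AddSubgroup.mem_map.mp (hdetmem x hx)
  have hy2' : α • R y = (M.det : ℝ) • x := by
    rw [← Int.cast_smul_eq_zsmul ℝ] at hy2
    exact hy2
  have hxy : ((M.det : ℝ) ^ 2 / α) • R⁻¹ x = M.det • y := by
    have hx' : x = (((M.det : ℝ))⁻¹ * α) • R y := by
      rw [mul_smul, hy2', inv_smul_smul₀ hdet]
    have hRx : R⁻¹ x = (((M.det : ℝ))⁻¹ * α) • y := by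
      rw [hx', LinearIsometryEquiv.map_smul]
      congr 1
      exact R.symm_apply_apply y
    rw [hRx, smul_smul,
      show (M.det : ℝ) ^ 2 / α * (((M.det : ℝ))⁻¹ * α) = (M.det : ℝ) by
        field_simp,
      Int.cast_smul_eq_zsmul]
  rw [hxy]
  exact AddSubgroup.zsmul_mem _ hy _

end Aux

theorem OSset_dual_and_scal_dual {d : ℕ} (Γ : AddSubgroup (Euc d)) (hΓ : IsLattice Γ) :
    OSset (dualLattice Γ) = OSset Γ ∧
    (∀ R ∈ OSset Γ, Scal (dualLattice Γ) R = Scal Γ R⁻¹) ∧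
    (∀ R ∈ OSset Γ, ∀ δ δ' : ℝ,
      IsDen (dualLattice Γ) R δ → IsDen Γ R⁻¹ δ' → δ = δ') := by
  have scal_eq : ∀ R : Euc d ≃ₗᵢ[ℝ] Euc d, Scal (dualLattice Γ) R = Scal Γ R⁻¹ := by
    intro R
    ext α
    constructor
    · intro hα
      have h' : α ∈ Scal (dualLattice Γ) (R⁻¹)⁻¹ := by rwa [inv_inv]
      have := scal_dual_of_scal_inv h'
      rwa [bidual Γ hΓ] at this
    · intro hα
      exact scal_dual_of_scal_inv hα
  obtain ⟨b, hb⟩ := hΓ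
  have os_eq : OSset (dualLattice Γ) = OSset Γ := by
    ext R
    constructor
    · rintro ⟨α, hα, hs⟩
      have h1 : α ∈ Scal Γ R⁻¹ := by rw [← scal_eq]; exact hs
      rw [hb] at h1
      obtain ⟨β, hβ, hβs⟩ := exists_inv_scal b R⁻¹ hα h1
      rw [inv_inv, ← hb] at hβs
      exact ⟨β, hβ, hβs⟩
    · rintro ⟨α, hα, hs⟩
      rw [hb] at hs
      obtain ⟨β, hβ, hβs⟩ := exists_inv_scal b R hα hs
      rw [← hb] at hβs
      have : β ∈ Scal (dualLattice Γ) R := by rw [scal_eq]; exact hβs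
      exact ⟨β, hβ, this⟩
  refine ⟨os_eq, fun R _ => scal_eq R, fun R _ δ δ' hδ hδ' => ?_⟩
  obtain ⟨hδ0, hδm, hδmin⟩ := hδ
  obtain ⟨hδ'0, hδ'm, hδ'min⟩ := hδ'
  rw [scal_eq] at hδm hδmin
  exact le_antisymm (hδmin δ' hδ'0 hδ'm) (hδ'min δ hδ0 hδm)
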